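/- (Theorem A.1, hindsight policy gradient with next-state rewards.) Let r : S → ℝ be a reward function depending only on the entered state, and for θ ∈ ℝ^d and s_0 ∈ S define the value V^θ(s_0) := Σ_{k=0}^∞ γ^k · Σ_{s'∈S} P_{k+1}^θ(s_0,s')·r(s'). Then θ ↦ V^θ(s_0) is differentiable, and its gradient satisfies ∇_θ V^θ(s_0) = Σ_{t=0}^∞ γ^t · Σ_{s∈S} P_t^θ(s_0,s) · Σ_{a∈A} ∇_θ log π_θ(s,a) · ( Σ_{k=t}^∞ γ^{k−t} · Σ_{s'∈S} h_{k+1−t}^θ(a|s,s')·P_{k+1−t}^θ(s,s')·r(s') ), where all series converge absolutely. -/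

import Mathlib

open Finset

noncomputable section
open scoped Classical

/-- n-step state probabilities induced by a policy `π` and a transition kernel `p`:
`Pn 0 s s' = [s' = s]` and `Pn (n+1) s s' = ∑ a, π s a * ∑ s'', p s a s'' * Pn n s'' s'`. -/
def Pn {S A : Type*} [Fintype S] [Fintype A] (p : S → A → S → ℝ) (π : S → A → ℝ) :
    ℕ → S → S → ℝ
  | 0, s, s' => if s' = s then 1 else 0
  | n + 1, s, s' => ∑ a, π s a * ∑ s'', p s a s'' * Pn p π n s'' s'

/-- Action-conditioned n-step probabilities, defined for indices `n ≥ 1` by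
`Pa (n+1) s a s' = ∑ s'', p s a s'' * Pn n s'' s'` (the value at `n = 0` is irrelevant). -/
def Pa {S A : Type*} [Fintype S] [Fintype A] (p : S → A → S → ℝ) (π : S → A → ℝ) :
    ℕ → S → A → S → ℝ
  | 0, _, _, _ => 0
  | n + 1, s, a, s' => ∑ s'', p s a s'' * Pn p π n s'' s'

/-- Hindsight probability `h_n(a | s, s')`. -/
def hca {S A : Type*} [Fintype S] [Fintype A] (p : S → A → S → ℝ) (π : S → A → ℝ)
    (n : ℕ) (a : A) (s s' : S) : ℝ :=
  if 0 < Pn p π n s s' then π s a * Pa p π n s a s' / Pn p π n s s' else 0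

section Lems
variable {S A : Type*} [Fintype S] [Fintype A] (p : S → A → S → ℝ) (π : S → A → ℝ)
  (hp0 : ∀ s a s', 0 ≤ p s a s') (hp1 : ∀ s a, ∑ s', p s a s' = 1)
  (hπ0 : ∀ s a, 0 ≤ π s a) (hπ1 : ∀ s, ∑ a, π s a = 1)

include hp0 hπ0 in
lemma Pn_nonneg : ∀ (n : ℕ) (s s' : S), 0 ≤ Pn p π n s s' := by
  intro n
  induction n with
  | zero => intro s s'; simp only [Pn]; positivity
  | succ n ih =>
    intro s s'
    simp only [Pn]
    apply Finset.sum_nonneg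
    intro a _
    exact mul_nonneg (hπ0 s a) (Finset.sum_nonneg fun s'' _ =>
      mul_nonneg (hp0 s a s'') (ih s'' s'))

include hp1 hπ1 in
lemma Pn_sum_one : ∀ (n : ℕ) (s : S), ∑ s', Pn p π n s s' = 1 := by
  intro n
  induction n with
  | zero => intro s; simp [Pn]
  | succ n ih =>
    intro s
    simp only [Pn]
    rw [Finset.sum_comm]
    have key : ∀ a, ∑ s', π s a * ∑ s'', p s a s'' * Pn p π n s'' s' = π s a := by
      intro a
      rw [← Finset.mul_sum, Finset.sum_comm]
      simp only [← Finset.mul_sum, ih]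
      simp [hp1 s a]
    simp only [key, hπ1 s]

include hp0 hp1 hπ0 hπ1 in
lemma Pn_le_one (n : ℕ) (s s' : S) : Pn p π n s s' ≤ 1 := by
  have h := Pn_sum_one p π hp1 hπ1 n s
  calc Pn p π n s s' ≤ ∑ t, Pn p π n s t :=
        Finset.single_le_sum (fun t _ => Pn_nonneg p π hp0 hπ0 n s t) (Finset.mem_univ s')
    _ = 1 := h

include hp0 hπ0 in
lemma Pa_nonneg (n : ℕ) (s : S) (a : A) (s' : S) : 0 ≤ Pa p π n s a s' := by
  cases n with
  | zero => simp [Pa]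
  | succ n =>
    simp only [Pa]
    exact Finset.sum_nonneg fun s'' _ =>
      mul_nonneg (hp0 s a s'') (Pn_nonneg p π hp0 hπ0 n s'' s')

include hp1 hπ1 in
lemma Pa_sum_one (n : ℕ) (s : S) (a : A) : ∑ s', Pa p π (n + 1) s a s' = 1 := by
  simp only [Pa]
  rw [Finset.sum_comm]
  simp only [← Finset.mul_sum, Pn_sum_one p π hp1 hπ1]
  simp [hp1 s a]

include hp0 hp1 hπ0 hπ1 in
lemma Pa_le_one (n : ℕ) (s : S) (a : A) (s' : S) : Pa p π (n + 1) s a s' ≤ 1 := by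
  calc Pa p π (n + 1) s a s' ≤ ∑ t, Pa p π (n + 1) s a t :=
        Finset.single_le_sum (fun t _ => Pa_nonneg p π hp0 hπ0 (n+1) s a t) (Finset.mem_univ s')
    _ = 1 := Pa_sum_one p π hp1 hπ1 n s a

lemma Pn_succ_eq_sum_Pa (n : ℕ) (s s' : S) :
    Pn p π (n + 1) s s' = ∑ a, π s a * Pa p π (n + 1) s a s' := by
  simp [Pn, Pa]

include hp0 hπ0 in
lemma hca_mul_Pn (n : ℕ) (a : A) (s s' : S) :
    hca p π (n + 1) a s s' * Pn p π (n + 1) s s' = π s a * Pa p π (n + 1) s a s' := by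
  by_cases h : 0 < Pn p π (n + 1) s s'
  · rw [hca, if_pos h, div_mul_cancel₀ _ (ne_of_gt h)]
  · have h0 : Pn p π (n + 1) s s' = 0 :=
      le_antisymm (not_lt.1 h) (Pn_nonneg p π hp0 hπ0 (n + 1) s s')
    rw [hca, if_neg h, h0, zero_mul]
    have hsum : ∑ b, π s b * Pa p π (n + 1) s b s' = 0 := by
      rw [← Pn_succ_eq_sum_Pa, h0]
    have := (Finset.sum_eq_zero_iff_of_nonneg (fun b _ =>
      mul_nonneg (hπ0 s b) (Pa_nonneg p π hp0 hπ0 (n+1) s b s'))).1 hsum a (Finset.mem_univ a)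
    exact this.symm

end Lems

section Deriv
variable {S A : Type*} [Fintype S] [Fintype A]
  {E : Type*} [NormedAddCommGroup E] [NormedSpace ℝ E]

/-- recursive form of the derivative of `Pn` in the policy parameter. -/
def Dpn (p : S → A → S → ℝ) (Pol : E → S → A → ℝ) (x : E) : ℕ → S → S → (E →L[ℝ] ℝ)
  | 0, _, _ => 0
  | n + 1, s, s' =>
      (∑ a, Pa p (Pol x) (n + 1) s a s' • fderiv ℝ (fun θ' => Pol θ' s a) x)
        + ∑ a, Pol x s a • ∑ s'', p s a s'' • Dpn p Pol x n s'' s'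

variable (p : S → A → S → ℝ) (Pol : E → S → A → ℝ)
  (hPoldiff : ∀ s a, ContDiff ℝ 1 fun θ => Pol θ s a)

include hPoldiff in
lemma hasFDerivAt_Pn (x : E) : ∀ (n : ℕ) (s s' : S),
    HasFDerivAt (fun θ' => Pn p (Pol θ') n s s') (Dpn p Pol x n s s') x := by
  intro n
  induction n with
  | zero =>
    intro s s'
    simp only [Pn, Dpn]
    exact hasFDerivAt_const _ _
  | succ n ih =>
    intro s s'
    have hD : ∀ s a, HasFDerivAt (fun θ' => Pol θ' s a)
        (fderiv ℝ (fun θ' => Pol θ' s a) x) x :=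
      fun s a => (((hPoldiff s a).differentiable one_ne_zero) x).hasFDerivAt
    have key : HasFDerivAt (fun θ' => ∑ a, Pol θ' s a * ∑ s'', p s a s'' * Pn p (Pol θ') n s'' s')
        (∑ a, (Pol x s a • ∑ s'', p s a s'' • Dpn p Pol x n s'' s'
          + (∑ s'', p s a s'' * Pn p (Pol x) n s'' s') • fderiv ℝ (fun θ' => Pol θ' s a) x)) x := by
      apply HasFDerivAt.fun_sum
      intro a _
      have hg : HasFDerivAt (fun θ' => ∑ s'', p s a s'' * Pn p (Pol θ') n s'' s')
          (∑ s'', p s a s'' • Dpn p Pol x n s'' s') x := by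
        apply HasFDerivAt.fun_sum
        intro s'' _
        exact (ih s'' s').const_mul _
      exact (hD s a).mul hg
    have : HasFDerivAt (fun θ' => Pn p (Pol θ') (n+1) s s') _ x := key
    convert this using 1
    simp only [Dpn, Pa, Finset.sum_add_distrib]
    rw [add_comm]

end Deriv

section Deriv2
variable {S A : Type*} [Fintype S] [Fintype A] [Nonempty S]
  {E : Type*} [NormedAddCommGroup E] [NormedSpace ℝ E]
  (p : S → A → S → ℝ) (Pol : E → S → A → ℝ)

lemma Dpn_norm_le (hp0 : ∀ s a s', 0 ≤ p s a s') (hp1 : ∀ s a, ∑ s', p s a s' = 1)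
    (x : E) (hπ0 : ∀ s a, 0 ≤ Pol x s a) (hπ1 : ∀ s, ∑ a, Pol x s a = 1)
    (C : ℝ) (hC : ∀ s, ∑ a, ‖fderiv ℝ (fun θ' => Pol θ' s a) x‖ ≤ C) :
    ∀ (n : ℕ) (s s' : S), ‖Dpn p Pol x n s s'‖ ≤ n * C := by
  have hC0 : 0 ≤ C :=
    le_trans (Finset.sum_nonneg fun a _ => norm_nonneg _) (hC (Classical.arbitrary S))
  intro n
  induction n with
  | zero => intro s s'; simp [Dpn]
  | succ n ih =>
    intro s s'
    simp only [Dpn]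
    refine le_trans (norm_add_le _ _) ?_
    have h1 : ‖∑ a, Pa p (Pol x) (n + 1) s a s' • fderiv ℝ (fun θ' => Pol θ' s a) x‖ ≤ C := by
      refine le_trans (norm_sum_le _ _) (le_trans ?_ (hC s))
      refine Finset.sum_le_sum fun a _ => ?_
      rw [norm_smul (Pa p (Pol x) (n+1) s a s') (fderiv ℝ (fun θ' => Pol θ' s a) x),
        Real.norm_eq_abs, abs_of_nonneg (Pa_nonneg p (Pol x) hp0 hπ0 (n+1) s a s')]
      exact mul_le_of_le_one_left (norm_nonneg _)
        (Pa_le_one p (Pol x) hp0 hp1 hπ0 hπ1 n s a s')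
    have h2 : ‖∑ a, Pol x s a • ∑ s'', p s a s'' • Dpn p Pol x n s'' s'‖ ≤ n * C := by
      refine le_trans (norm_sum_le _ _) ?_
      have hb : ∀ a, ‖Pol x s a • ∑ s'', p s a s'' • Dpn p Pol x n s'' s'‖
          ≤ Pol x s a * (n * C) := by
        intro a
        rw [norm_smul (Pol x s a) (∑ s'', p s a s'' • Dpn p Pol x n s'' s'),
          Real.norm_eq_abs, abs_of_nonneg (hπ0 s a)]
        refine mul_le_mul_of_nonneg_left ?_ (hπ0 s a)
        refine le_trans (norm_sum_le _ _) ?_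
        have : ∀ s'', ‖p s a s'' • Dpn p Pol x n s'' s'‖ ≤ p s a s'' * (n * C) := by
          intro s''
          rw [norm_smul (p s a s'') (Dpn p Pol x n s'' s'),
            Real.norm_eq_abs, abs_of_nonneg (hp0 s a s'')]
          exact mul_le_mul_of_nonneg_left (ih s'' s') (hp0 s a s'')
        refine le_trans (Finset.sum_le_sum fun s'' _ => this s'') ?_
        rw [← Finset.sum_mul, hp1 s a, one_mul]
      refine le_trans (Finset.sum_le_sum fun a _ => hb a) ?_
      rw [← Finset.sum_mul, hπ1 s, one_mul]
    calc ‖∑ a, Pa p (Pol x) (n + 1) s a s' • fderiv ℝ (fun θ' => Pol θ' s a) x‖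
          + ‖∑ a, Pol x s a • ∑ s'', p s a s'' • Dpn p Pol x n s'' s'‖
        ≤ C + n * C := add_le_add h1 h2
      _ = (n + 1 : ℕ) * C := by push_cast; ring

end Deriv2

lemma swap4 {ι₁ ι₂ ι₃ : Type*} {M : Type*} [AddCommMonoid M] [Module ℝ M]
    (s₁ : Finset ι₁) (s₂ : Finset ι₂) (s₃ : Finset ι₃)
    (c : ι₁ → ℝ) (q : ι₁ → ι₂ → ℝ) (u : ι₂ → ι₃ → ℝ) (w : ι₃ → M) :
    ∑ a ∈ s₁, c a • ∑ b ∈ s₂, q a b • ∑ k ∈ s₃, u b k • w k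
      = ∑ k ∈ s₃, (∑ a ∈ s₁, c a * ∑ b ∈ s₂, q a b * u b k) • w k := by
  simp only [Finset.smul_sum, smul_smul, Finset.sum_smul, Finset.mul_sum]
  rw [show (∑ a ∈ s₁, ∑ b ∈ s₂, ∑ k ∈ s₃, (c a * (q a b * u b k)) • w k)
      = ∑ a ∈ s₁, ∑ k ∈ s₃, ∑ b ∈ s₂, (c a * (q a b * u b k)) • w k from
    Finset.sum_congr rfl fun a _ => Finset.sum_comm, Finset.sum_comm]

section Deriv3
variable {S A : Type*} [Fintype S] [Fintype A]
  {E : Type*} [NormedAddCommGroup E] [NormedSpace ℝ E]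
  (p : S → A → S → ℝ) (Pol : E → S → A → ℝ)

lemma Dpn_closed (x : E) : ∀ (n : ℕ) (s s' : S),
    Dpn p Pol x n s s' = ∑ t ∈ Finset.range n, ∑ σ, Pn p (Pol x) t s σ •
      ∑ a, Pa p (Pol x) (n - t) σ a s' • fderiv ℝ (fun θ' => Pol θ' σ a) x := by
  intro n
  induction n with
  | zero => intro s s'; simp [Dpn]
  | succ n ih =>
    intro s s'
    simp only [Dpn]
    set D : S → A → (E →L[ℝ] ℝ) := fun σ a => fderiv ℝ (fun θ' => Pol θ' σ a) x with hD
    set w : ℕ × S → (E →L[ℝ] ℝ) :=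
      fun ts => ∑ a, Pa p (Pol x) (n - ts.1) ts.2 a s' • D ts.2 a with hw
    have hsecond : (∑ a, Pol x s a • ∑ s'', p s a s'' • Dpn p Pol x n s'' s')
        = ∑ t ∈ Finset.range n, ∑ σ, Pn p (Pol x) (t + 1) s σ •
            ∑ a, Pa p (Pol x) (n - t) σ a s' • D σ a := by
      have hih : ∀ s'', Dpn p Pol x n s'' s'
          = ∑ ts ∈ Finset.range n ×ˢ (Finset.univ : Finset S),
              Pn p (Pol x) ts.1 s'' ts.2 • w ts := by
        intro s''
        rw [ih s'' s', Finset.sum_product]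
      simp only [hih]
      rw [swap4, Finset.sum_product]
      refine Finset.sum_congr rfl fun t ht => Finset.sum_congr rfl fun σ _ => ?_
      have : Pn p (Pol x) (t + 1) s σ
          = ∑ a, Pol x s a * ∑ s'', p s a s'' * Pn p (Pol x) t s'' σ := rfl
      rw [this]
    rw [hsecond, Finset.sum_range_succ', add_comm]
    congr 1
    · refine Finset.sum_congr rfl fun t _ => Finset.sum_congr rfl fun σ _ => ?_
      simp [Nat.add_sub_add_right, hD]
    · simp [Pn, ite_smul]

end Deriv3

lemma swap3 {ι₁ ι₂ ι₃ : Type*} {M : Type*} [AddCommMonoid M] [Module ℝ M]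
    (s₁ : Finset ι₁) (s₂ : Finset ι₂) (s₃ : Finset ι₃)
    (rr : ι₁ → ℝ) (P : ι₂ → ℝ) (Q : ι₂ → ι₃ → ι₁ → ℝ) (w : ι₂ → ι₃ → M) :
    ∑ x ∈ s₁, rr x • ∑ σ ∈ s₂, P σ • ∑ a ∈ s₃, Q σ a x • w σ a
      = ∑ σ ∈ s₂, P σ • ∑ a ∈ s₃, (∑ x ∈ s₁, Q σ a x * rr x) • w σ a := by
  simp only [Finset.smul_sum, smul_smul, Finset.sum_smul, Finset.mul_sum]
  rw [Finset.sum_comm]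
  refine Finset.sum_congr rfl fun σ _ => ?_
  rw [Finset.sum_comm]
  refine Finset.sum_congr rfl fun a _ => Finset.sum_congr rfl fun x _ => ?_
  congr 1
  ring


set_option maxHeartbeats 2000000 in
/-- Theorem A.1: hindsight policy gradient with next-state rewards.
The value `V^θ(s₀) = ∑_k γ^k ∑_{s'} P^θ_{k+1}(s₀,s') r(s')` converges absolutely, is
differentiable in `θ`, and its gradient is the hindsight-credited policy-gradient
series (with `j = k - t` indexing the lag), all series converging absolutely. -/
theorem hindsight_policy_gradient_next_state_rewards
    {S A : Type*} [Fintype S] [Fintype A] [Nonempty S] [Nonempty A]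
    (p : S → A → S → ℝ)
    (hp0 : ∀ s a s', 0 ≤ p s a s') (hp1 : ∀ s a, ∑ s', p s a s' = 1)
    (d : ℕ) (Pol : EuclideanSpace ℝ (Fin d) → S → A → ℝ)
    (hPolpos : ∀ θ s a, 0 < Pol θ s a) (hPol1 : ∀ θ s, ∑ a, Pol θ s a = 1)
    (hPoldiff : ∀ s a, ContDiff ℝ 1 fun θ => Pol θ s a)
    (γ : ℝ) (hγ0 : 0 ≤ γ) (hγ1 : γ < 1) (r : S → ℝ) (s₀ : S)
    (θ : EuclideanSpace ℝ (Fin d)) :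
    Summable (fun k : ℕ => |γ ^ k * ∑ s', Pn p (Pol θ) (k + 1) s₀ s' * r s'|) ∧
    DifferentiableAt ℝ
      (fun θ' => ∑' k : ℕ, γ ^ k * ∑ s', Pn p (Pol θ') (k + 1) s₀ s' * r s') θ ∧
    (∀ (s : S) (a : A), Summable (fun j : ℕ =>
      |γ ^ j * ∑ s', hca p (Pol θ) (j + 1) a s s' * Pn p (Pol θ) (j + 1) s s' * r s'|)) ∧
    Summable (fun t : ℕ =>
      ‖(γ ^ t) • ∑ s, (Pn p (Pol θ) t s₀ s) • ∑ a,
          (∑' j : ℕ, γ ^ j *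
              ∑ s', hca p (Pol θ) (j + 1) a s s' * Pn p (Pol θ) (j + 1) s s' * r s') •
            fderiv ℝ (fun θ' => Real.log (Pol θ' s a)) θ‖) ∧
    fderiv ℝ (fun θ' => ∑' k : ℕ, γ ^ k * ∑ s', Pn p (Pol θ') (k + 1) s₀ s' * r s') θ =
      ∑' t : ℕ, (γ ^ t) • ∑ s, (Pn p (Pol θ) t s₀ s) • ∑ a,
        (∑' j : ℕ, γ ^ j *
            ∑ s', hca p (Pol θ) (j + 1) a s s' * Pn p (Pol θ) (j + 1) s s' * r s') •
          fderiv ℝ (fun θ' => Real.log (Pol θ' s a)) θ := by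
  classical
  have hπ0 : ∀ (x : EuclideanSpace ℝ (Fin d)) (s : S) (a : A), 0 ≤ Pol x s a :=
    fun x s a => (hPolpos x s a).le
  set R : ℝ := ∑ s', |r s'| with hRdef
  have hR0 : 0 ≤ R := Finset.sum_nonneg fun _ _ => abs_nonneg _
  have habs : ∀ (w : S → ℝ), (∀ s', 0 ≤ w s') → (∀ s', w s' ≤ 1) →
      |∑ s', w s' * r s'| ≤ R := by
    intro w h0 h1
    refine le_trans (Finset.abs_sum_le_sum_abs _ _) (Finset.sum_le_sum fun s' _ => ?_)
    rw [abs_mul, abs_of_nonneg (h0 s')]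
    exact mul_le_of_le_one_left (abs_nonneg _) (h1 s')
  have hgeom : Summable fun k : ℕ => γ ^ k := summable_geometric_of_lt_one hγ0 hγ1
  -- Part 1
  have part1 : Summable (fun k : ℕ => |γ ^ k * ∑ s', Pn p (Pol θ) (k + 1) s₀ s' * r s'|) := by
    refine Summable.of_nonneg_of_le (fun k => abs_nonneg _) (fun k => ?_) (hgeom.mul_right R)
    rw [abs_mul, abs_pow, abs_of_nonneg hγ0]
    exact mul_le_mul_of_nonneg_left
      (habs _ (fun s' => Pn_nonneg p (Pol θ) hp0 (hπ0 θ) (k+1) s₀ s')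
        (fun s' => Pn_le_one p (Pol θ) hp0 hp1 (hπ0 θ) (hPol1 θ) (k+1) s₀ s'))
      (pow_nonneg hγ0 k)
  -- bound on derivatives on the closed unit ball
  set D : S → A → (EuclideanSpace ℝ (Fin d) →L[ℝ] ℝ) :=
    fun σ a => fderiv ℝ (fun θ' => Pol θ' σ a) θ with hDdef
  have hgcont : Continuous fun x : EuclideanSpace ℝ (Fin d) =>
      ∑ σ : S, ∑ a : A, ‖fderiv ℝ (fun θ' => Pol θ' σ a) x‖ := by
    refine continuous_finset_sum _ fun σ _ => continuous_finset_sum _ fun a _ => ?_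
    exact ((hPoldiff σ a).continuous_fderiv one_ne_zero).norm
  obtain ⟨y, hyK, hymax'⟩ := (isCompact_closedBall θ 1).exists_isMaxOn
    ⟨θ, Metric.mem_closedBall_self one_pos.le⟩ hgcont.continuousOn
  have hymax : ∀ x ∈ Metric.closedBall θ 1,
      (∑ σ : S, ∑ a : A, ‖fderiv ℝ (fun θ' => Pol θ' σ a) x‖)
        ≤ ∑ σ : S, ∑ a : A, ‖fderiv ℝ (fun θ' => Pol θ' σ a) y‖ :=
    fun x hx => hymax' hx
  set C : ℝ := ∑ σ : S, ∑ a : A, ‖fderiv ℝ (fun θ' => Pol θ' σ a) y‖ with hCdef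
  have hCb : ∀ x ∈ Metric.closedBall θ 1, ∀ σ : S,
      ∑ a, ‖fderiv ℝ (fun θ' => Pol θ' σ a) x‖ ≤ C := by
    intro x hx σ
    refine le_trans ?_ (hymax x hx)
    exact Finset.single_le_sum
      (f := fun σ => ∑ a, ‖fderiv ℝ (fun θ' => Pol θ' σ a) x‖)
      (fun σ _ => Finset.sum_nonneg fun a _ => norm_nonneg _) (Finset.mem_univ σ)
  have hC0 : 0 ≤ C := Finset.sum_nonneg fun _ _ => Finset.sum_nonneg fun _ _ => norm_nonneg _
  have hθK : θ ∈ Metric.closedBall θ 1 := Metric.mem_closedBall_self one_pos.le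
  -- the summable bound for the series of derivatives
  have hu : Summable (fun k : ℕ => γ ^ k * (((k : ℝ) + 1) * (C * R))) := by
    have h1 : Summable fun k : ℕ => (k : ℝ) * γ ^ k := by
      simpa using summable_pow_mul_geometric_of_norm_lt_one 1
        (r := γ) (by rwa [Real.norm_eq_abs, abs_of_nonneg hγ0])
    have h2 : Summable fun k : ℕ => ((k : ℝ) + 1) * γ ^ k := by
      simpa [add_mul] using h1.add hgeom
    exact (h2.mul_right (C * R)).congr fun k => by ring
  -- derivative of each summand
  have hfderiv : ∀ (k : ℕ) (x : EuclideanSpace ℝ (Fin d)),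
      HasFDerivAt (fun y' => γ ^ k * ∑ s', Pn p (Pol y') (k + 1) s₀ s' * r s')
        (γ ^ k • ∑ s', r s' • Dpn p Pol x (k + 1) s₀ s') x := by
    intro k x
    have h1 : ∀ s' : S, HasFDerivAt (fun y' => Pn p (Pol y') (k+1) s₀ s' * r s')
        (r s' • Dpn p Pol x (k+1) s₀ s') x := by
      intro s'
      simpa [mul_comm] using (hasFDerivAt_Pn p Pol hPoldiff x (k+1) s₀ s').const_mul (r s')
    exact (HasFDerivAt.fun_sum (fun s' _ => h1 s')).const_mul (γ ^ k)
  have hf'bound : ∀ (k : ℕ) (x : EuclideanSpace ℝ (Fin d)), x ∈ Metric.closedBall θ 1 →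
      ‖γ ^ k • ∑ s', r s' • Dpn p Pol x (k + 1) s₀ s'‖ ≤ γ ^ k * (((k : ℝ) + 1) * (C * R)) := by
    intro k x hx
    have hDb : ∀ s' : S, ‖Dpn p Pol x (k+1) s₀ s'‖ ≤ ((k : ℝ) + 1) * C := by
      intro s'
      have := Dpn_norm_le p Pol hp0 hp1 x (hπ0 x) (hPol1 x) C (hCb x hx) (k+1) s₀ s'
      push_cast at this
      exact this
    rw [norm_smul (γ ^ k) (∑ s', r s' • Dpn p Pol x (k + 1) s₀ s'),
      Real.norm_eq_abs, abs_pow, abs_of_nonneg hγ0]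
    refine mul_le_mul_of_nonneg_left ?_ (pow_nonneg hγ0 k)
    refine le_trans (norm_sum_le _ _) ?_
    have hb : ∀ s' : S, ‖r s' • Dpn p Pol x (k+1) s₀ s'‖ ≤ |r s'| * (((k : ℝ) + 1) * C) := by
      intro s'
      rw [norm_smul (r s') (Dpn p Pol x (k+1) s₀ s'), Real.norm_eq_abs]
      exact mul_le_mul_of_nonneg_left (hDb s') (abs_nonneg _)
    refine le_trans (Finset.sum_le_sum fun s' _ => hb s') ?_
    rw [← Finset.sum_mul]
    exact le_of_eq (by rw [← hRdef]; ring)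
  -- the main differentiability statement
  have mainDeriv : HasFDerivAt
      (fun y' => ∑' k : ℕ, γ ^ k * ∑ s', Pn p (Pol y') (k + 1) s₀ s' * r s')
      (∑' k : ℕ, γ ^ k • ∑ s', r s' • Dpn p Pol θ (k + 1) s₀ s') θ := by
    refine hasFDerivAt_tsum_of_isPreconnected hu Metric.isOpen_ball
      (convex_ball θ 1).isPreconnected
      (fun k x _ => hfderiv k x)
      (fun k x hx => hf'bound k x (Metric.ball_subset_closedBall hx))
      (Metric.mem_ball_self one_pos) ?_ (Metric.mem_ball_self one_pos)
    exact summable_abs_iff.mp part1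
  -- Part 3 data
  have hπ1 : ∀ s, ∑ a, Pol θ s a = 1 := hPol1 θ
  have hπ0' : ∀ (s : S) (a : A), 0 ≤ Pol θ s a := hπ0 θ
  have hXb : ∀ (σ : S) (a : A) (j : ℕ), |∑ s', Pa p (Pol θ) (j+1) σ a s' * r s'| ≤ R :=
    fun σ a j => habs _ (fun s' => Pa_nonneg p (Pol θ) hp0 hπ0' (j+1) σ a s')
      (fun s' => Pa_le_one p (Pol θ) hp0 hp1 hπ0' hπ1 j σ a s')
  have hXsum : ∀ (σ : S) (a : A),
      Summable fun j : ℕ => γ ^ j * ∑ s', Pa p (Pol θ) (j+1) σ a s' * r s' := by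
    intro σ a
    refine Summable.of_norm_bounded (hgeom.mul_right R) fun j => ?_
    rw [Real.norm_eq_abs, abs_mul, abs_pow, abs_of_nonneg hγ0]
    exact mul_le_mul_of_nonneg_left (hXb σ a j) (pow_nonneg hγ0 j)
  have hWb : ∀ (σ : S) (a : A),
      |∑' j : ℕ, γ ^ j * ∑ s', Pa p (Pol θ) (j+1) σ a s' * r s'| ≤ R * (1 - γ)⁻¹ := by
    intro σ a
    have h1 := norm_tsum_le_tsum_norm ((hXsum σ a).norm)
    simp only [Real.norm_eq_abs] at h1
    refine le_trans h1 ?_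
    have h2 : (∑' j : ℕ, |γ ^ j * ∑ s', Pa p (Pol θ) (j+1) σ a s' * r s'|)
        ≤ ∑' j : ℕ, γ ^ j * R := by
      refine Summable.tsum_le_tsum (fun j => ?_) (summable_abs_iff.mpr (hXsum σ a)) (hgeom.mul_right R)
      rw [abs_mul, abs_pow, abs_of_nonneg hγ0]
      exact mul_le_mul_of_nonneg_left (hXb σ a j) (pow_nonneg hγ0 j)
    refine le_trans h2 ?_
    rw [tsum_mul_right, tsum_geometric_of_lt_one hγ0 hγ1]
    exact le_of_eq (mul_comm _ _)
  have hid : ∀ (s : S) (a : A) (j : ℕ),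
      ∑ s', hca p (Pol θ) (j+1) a s s' * Pn p (Pol θ) (j+1) s s' * r s'
        = Pol θ s a * ∑ s', Pa p (Pol θ) (j+1) s a s' * r s' := by
    intro s a j
    rw [Finset.mul_sum]
    refine Finset.sum_congr rfl fun s' _ => ?_
    rw [hca_mul_Pn p (Pol θ) hp0 hπ0' j a s s', mul_assoc]
  have hπle1 : ∀ (s : S) (a : A), Pol θ s a ≤ 1 := fun s a =>
    le_trans (Finset.single_le_sum (fun a _ => hπ0' s a) (Finset.mem_univ a)) (le_of_eq (hπ1 s))
  have part3 : ∀ (s : S) (a : A), Summable (fun j : ℕ =>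
      |γ ^ j * ∑ s', hca p (Pol θ) (j + 1) a s s' * Pn p (Pol θ) (j + 1) s s' * r s'|) := by
    intro s a
    refine Summable.of_nonneg_of_le (fun j => abs_nonneg _) (fun j => ?_) (hgeom.mul_right R)
    rw [hid s a j, abs_mul, abs_pow, abs_of_nonneg hγ0, abs_mul]
    refine mul_le_mul_of_nonneg_left ?_ (pow_nonneg hγ0 j)
    calc |Pol θ s a| * |∑ s', Pa p (Pol θ) (j+1) s a s' * r s'| ≤ 1 * R :=
          mul_le_mul (by rw [abs_of_nonneg (hπ0' s a)]; exact hπle1 s a) (hXb s a j)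
            (abs_nonneg _) one_pos.le
      _ = R := one_mul R
  -- Q = π * W and the log-derivative identity
  have hQ : ∀ (s : S) (a : A),
      (∑' j : ℕ, γ ^ j * ∑ s', hca p (Pol θ) (j + 1) a s s' * Pn p (Pol θ) (j + 1) s s' * r s')
        = Pol θ s a * ∑' j : ℕ, γ ^ j * ∑ s', Pa p (Pol θ) (j+1) s a s' * r s' := by
    intro s a
    have h : ∀ j : ℕ, γ ^ j * ∑ s', hca p (Pol θ) (j + 1) a s s' * Pn p (Pol θ) (j + 1) s s' * r s'
        = Pol θ s a * (γ ^ j * ∑ s', Pa p (Pol θ) (j+1) s a s' * r s') := fun j => by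
      rw [hid s a j]; ring
    rw [tsum_congr h, tsum_mul_left]
  have hDfd : ∀ (s : S) (a : A), HasFDerivAt (fun θ' => Pol θ' s a)
      (fderiv ℝ (fun θ' => Pol θ' s a) θ) θ :=
    fun s a => (((hPoldiff s a).differentiable one_ne_zero) θ).hasFDerivAt
  have hlog : ∀ (s : S) (a : A), fderiv ℝ (fun θ' => Real.log (Pol θ' s a)) θ
      = (Pol θ s a)⁻¹ • fderiv ℝ (fun θ' => Pol θ' s a) θ := by
    intro s a
    exact ((hDfd s a).log (ne_of_gt (hPolpos θ s a))).fderiv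
  have hQlog : ∀ (s : S) (a : A),
      (∑' j : ℕ, γ ^ j * ∑ s', hca p (Pol θ) (j + 1) a s s' * Pn p (Pol θ) (j + 1) s s' * r s') •
        fderiv ℝ (fun θ' => Real.log (Pol θ' s a)) θ
      = (∑' j : ℕ, γ ^ j * ∑ s', Pa p (Pol θ) (j+1) s a s' * r s') •
          fderiv ℝ (fun θ' => Pol θ' s a) θ := by
    intro s a
    rw [hQ s a, hlog s a, smul_smul]
    congr 1
    rw [mul_comm (Pol θ s a) _, mul_assoc, mul_inv_cancel₀ (ne_of_gt (hPolpos θ s a)), mul_one]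
  have hTt : ∀ t : ℕ,
      ((γ : ℝ) ^ t • ∑ s, Pn p (Pol θ) t s₀ s • ∑ a,
        (∑' j : ℕ, γ ^ j *
            ∑ s', hca p (Pol θ) (j + 1) a s s' * Pn p (Pol θ) (j + 1) s s' * r s') •
          fderiv ℝ (fun θ' => Real.log (Pol θ' s a)) θ)
      = γ ^ t • ∑ σ, Pn p (Pol θ) t s₀ σ •
          ∑ a, (∑' j : ℕ, γ ^ j * ∑ s', Pa p (Pol θ) (j+1) σ a s' * r s') •
            fderiv ℝ (fun θ' => Pol θ' σ a) θ := by
    intro t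
    congr 1
    refine Finset.sum_congr rfl fun σ _ => ?_
    congr 1
    exact Finset.sum_congr rfl fun a _ => hQlog σ a
  -- generic norm bound
  have hYb : ∀ (t : ℕ) (c : S → A → ℝ) (B : ℝ), 0 ≤ B → (∀ σ a, |c σ a| ≤ B) →
      ‖∑ σ, Pn p (Pol θ) t s₀ σ • ∑ a, c σ a • fderiv ℝ (fun θ' => Pol θ' σ a) θ‖ ≤ B * C := by
    intro t c B hB hc
    refine le_trans (norm_sum_le _ _) ?_
    have hσ : ∀ σ : S, ‖Pn p (Pol θ) t s₀ σ • ∑ a, c σ a • fderiv ℝ (fun θ' => Pol θ' σ a) θ‖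
        ≤ Pn p (Pol θ) t s₀ σ * (B * C) := by
      intro σ
      rw [norm_smul (Pn p (Pol θ) t s₀ σ) (∑ a, c σ a • fderiv ℝ (fun θ' => Pol θ' σ a) θ),
        Real.norm_eq_abs, abs_of_nonneg (Pn_nonneg p (Pol θ) hp0 hπ0' t s₀ σ)]
      refine mul_le_mul_of_nonneg_left ?_ (Pn_nonneg p (Pol θ) hp0 hπ0' t s₀ σ)
      refine le_trans (norm_sum_le _ _) ?_
      have ha : ∀ a : A, ‖c σ a • fderiv ℝ (fun θ' => Pol θ' σ a) θ‖
          ≤ B * ‖fderiv ℝ (fun θ' => Pol θ' σ a) θ‖ := by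
        intro a
        rw [norm_smul (c σ a) (fderiv ℝ (fun θ' => Pol θ' σ a) θ), Real.norm_eq_abs]
        exact mul_le_mul_of_nonneg_right (hc σ a) (norm_nonneg _)
      refine le_trans (Finset.sum_le_sum fun a _ => ha a) ?_
      rw [← Finset.mul_sum]
      exact mul_le_mul_of_nonneg_left (hCb θ hθK σ) hB
    refine le_trans (Finset.sum_le_sum fun σ _ => hσ σ) ?_
    rw [← Finset.sum_mul, Pn_sum_one p (Pol θ) hp1 hπ1 t s₀, one_mul]
  have hB0 : 0 ≤ R * (1 - γ)⁻¹ := mul_nonneg hR0 (inv_nonneg.2 (by linarith))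
  have part4 : Summable (fun t : ℕ =>
      ‖(γ : ℝ) ^ t • ∑ s, Pn p (Pol θ) t s₀ s • ∑ a,
          (∑' j : ℕ, γ ^ j *
              ∑ s', hca p (Pol θ) (j + 1) a s s' * Pn p (Pol θ) (j + 1) s s' * r s') •
            fderiv ℝ (fun θ' => Real.log (Pol θ' s a)) θ‖) := by
    refine Summable.of_nonneg_of_le (fun t => norm_nonneg _) (fun t => ?_)
      (hgeom.mul_right ((R * (1 - γ)⁻¹) * C))
    rw [hTt t, norm_smul ((γ : ℝ) ^ t)
      (∑ σ, Pn p (Pol θ) t s₀ σ • ∑ a, (∑' j : ℕ, γ ^ j *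
        ∑ s', Pa p (Pol θ) (j+1) σ a s' * r s') • fderiv ℝ (fun θ' => Pol θ' σ a) θ),
      Real.norm_eq_abs, abs_pow, abs_of_nonneg hγ0]
    exact mul_le_mul_of_nonneg_left (hYb t _ _ hB0 hWb) (pow_nonneg hγ0 t)
  -- the double series
  set G : ℕ × ℕ → (EuclideanSpace ℝ (Fin d) →L[ℝ] ℝ) := fun tj =>
    γ ^ (tj.1 + tj.2) • ∑ σ, Pn p (Pol θ) tj.1 s₀ σ •
      ∑ a, (∑ s', Pa p (Pol θ) (tj.2 + 1) σ a s' * r s') •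
        fderiv ℝ (fun θ' => Pol θ' σ a) θ with hGdef
  have hGnorm : ∀ tj : ℕ × ℕ, ‖G tj‖ ≤ γ ^ tj.1 * γ ^ tj.2 * (R * C) := by
    intro tj
    rw [hGdef]
    rw [norm_smul ((γ : ℝ) ^ (tj.1 + tj.2)) (∑ σ, Pn p (Pol θ) tj.1 s₀ σ •
      ∑ a, (∑ s', Pa p (Pol θ) (tj.2 + 1) σ a s' * r s') •
        fderiv ℝ (fun θ' => Pol θ' σ a) θ), Real.norm_eq_abs, abs_pow, abs_of_nonneg hγ0,
      pow_add]
    exact mul_le_mul_of_nonneg_left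
      (hYb tj.1 (fun σ a => ∑ s', Pa p (Pol θ) (tj.2 + 1) σ a s' * r s') R hR0
        (fun σ a => hXb σ a tj.2))
      (mul_nonneg (pow_nonneg hγ0 _) (pow_nonneg hγ0 _))
  have hGsum : Summable G := by
    refine Summable.of_norm_bounded (g := fun tj : ℕ × ℕ => γ ^ tj.1 * γ ^ tj.2 * (R * C)) ?_ hGnorm
    exact (Summable.mul_of_nonneg hgeom hgeom (fun _ => pow_nonneg hγ0 _)
      (fun _ => pow_nonneg hγ0 _)).mul_right (R * C)
  have hf'θ : ∀ k : ℕ, (γ ^ k • ∑ s', r s' • Dpn p Pol θ (k+1) s₀ s')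
      = ∑ tj ∈ Finset.HasAntidiagonal.antidiagonal k, G tj := by
    intro k
    rw [Finset.Nat.sum_antidiagonal_eq_sum_range_succ_mk]
    rw [show (∑ s', r s' • Dpn p Pol θ (k+1) s₀ s')
        = ∑ s', r s' • ∑ t ∈ Finset.range (k+1), ∑ σ, Pn p (Pol θ) t s₀ σ •
            ∑ a, Pa p (Pol θ) (k+1-t) σ a s' • fderiv ℝ (fun θ' => Pol θ' σ a) θ from
      Finset.sum_congr rfl fun s' _ => by rw [Dpn_closed p Pol θ (k+1) s₀ s']]
    rw [show (∑ s', r s' • ∑ t ∈ Finset.range (k+1), ∑ σ, Pn p (Pol θ) t s₀ σ •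
        ∑ a, Pa p (Pol θ) (k+1-t) σ a s' • fderiv ℝ (fun θ' => Pol θ' σ a) θ)
        = ∑ t ∈ Finset.range (k+1), ∑ s', r s' • ∑ σ, Pn p (Pol θ) t s₀ σ •
            ∑ a, Pa p (Pol θ) (k+1-t) σ a s' • fderiv ℝ (fun θ' => Pol θ' σ a) θ from by
      simp only [Finset.smul_sum]; exact Finset.sum_comm, Finset.smul_sum]
    refine Finset.sum_congr rfl fun t ht => ?_
    rw [swap3]
    simp only [hGdef]
    have htk : t ≤ k := Nat.lt_succ_iff.mp (Finset.mem_range.mp ht)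
    have e1 : k + 1 - t = (k - t) + 1 := by omega
    have e2 : t + (k - t) = k := Nat.add_sub_cancel' htk
    rw [e1, e2]
  have hC3 : ∀ t : ℕ, (∑' j : ℕ, G (t, j)) = γ ^ t • ∑ σ, Pn p (Pol θ) t s₀ σ •
      ∑ a, (∑' j : ℕ, γ ^ j * ∑ s', Pa p (Pol θ) (j+1) σ a s' * r s') •
        fderiv ℝ (fun θ' => Pol θ' σ a) θ := by
    intro t
    have flat : ∀ j : ℕ, G (t, j) = ∑ σ, ∑ a,
        ((γ ^ t * Pn p (Pol θ) t s₀ σ) * (γ ^ j * ∑ s', Pa p (Pol θ) (j+1) σ a s' * r s')) •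
          fderiv ℝ (fun θ' => Pol θ' σ a) θ := by
      intro j
      simp only [hGdef, Finset.smul_sum, smul_smul, pow_add]
      refine Finset.sum_congr rfl fun σ _ => Finset.sum_congr rfl fun a _ => ?_
      congr 1
      ring
    have hscal : ∀ (σ : S) (a : A), Summable fun j : ℕ =>
        (γ ^ t * Pn p (Pol θ) t s₀ σ) * (γ ^ j * ∑ s', Pa p (Pol θ) (j+1) σ a s' * r s') :=
      fun σ a => (hXsum σ a).mul_left _
    calc ∑' j : ℕ, G (t, j)
        = ∑' j : ℕ, ∑ σ, ∑ a,
            ((γ ^ t * Pn p (Pol θ) t s₀ σ) *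
              (γ ^ j * ∑ s', Pa p (Pol θ) (j+1) σ a s' * r s')) •
              fderiv ℝ (fun θ' => Pol θ' σ a) θ := tsum_congr flat
      _ = ∑ σ, ∑' j : ℕ, ∑ a,
            ((γ ^ t * Pn p (Pol θ) t s₀ σ) *
              (γ ^ j * ∑ s', Pa p (Pol θ) (j+1) σ a s' * r s')) •
              fderiv ℝ (fun θ' => Pol θ' σ a) θ :=
          Summable.tsum_finsetSum fun σ _ => summable_sum fun a _ => (hscal σ a).smul_const _
      _ = ∑ σ, ∑ a, ∑' j : ℕ,
            ((γ ^ t * Pn p (Pol θ) t s₀ σ) *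
              (γ ^ j * ∑ s', Pa p (Pol θ) (j+1) σ a s' * r s')) •
              fderiv ℝ (fun θ' => Pol θ' σ a) θ :=
          Finset.sum_congr rfl fun σ _ => Summable.tsum_finsetSum fun a _ => (hscal σ a).smul_const _
      _ = ∑ σ, ∑ a, (∑' j : ℕ,
            (γ ^ t * Pn p (Pol θ) t s₀ σ) *
              (γ ^ j * ∑ s', Pa p (Pol θ) (j+1) σ a s' * r s')) •
              fderiv ℝ (fun θ' => Pol θ' σ a) θ :=
          Finset.sum_congr rfl fun σ _ => Finset.sum_congr rfl fun a _ =>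
            Summable.tsum_smul_const (hscal σ a) _
      _ = γ ^ t • ∑ σ, Pn p (Pol θ) t s₀ σ •
            ∑ a, (∑' j : ℕ, γ ^ j * ∑ s', Pa p (Pol θ) (j+1) σ a s' * r s') •
              fderiv ℝ (fun θ' => Pol θ' σ a) θ := by
          simp only [tsum_mul_left, Finset.smul_sum, smul_smul]
          refine Finset.sum_congr rfl fun σ _ => Finset.sum_congr rfl fun a _ => ?_
          congr 1
          ring
  -- assemble the tsum over ℕ × ℕ
  have hσsum : Summable (fun x : Σ k : ℕ, Finset.HasAntidiagonal.antidiagonal k => G x.2.1) :=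
    Finset.HasAntidiagonal.sigmaAntidiagonalEquivProd.summable_iff.mpr hGsum
  have hstep1 : (∑' k : ℕ, γ ^ k • ∑ s', r s' • Dpn p Pol θ (k+1) s₀ s')
      = ∑' tj : ℕ × ℕ, G tj := by
    calc (∑' k : ℕ, γ ^ k • ∑ s', r s' • Dpn p Pol θ (k+1) s₀ s')
        = ∑' k : ℕ, ∑ tj ∈ Finset.HasAntidiagonal.antidiagonal k, G tj := tsum_congr hf'θ
      _ = ∑' k : ℕ, ∑' c : Finset.HasAntidiagonal.antidiagonal k, G c.1 := by
          refine tsum_congr fun k => ?_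
          rw [tsum_fintype]
          exact (Finset.sum_finset_coe _ _).symm
      _ = ∑' x : Σ k : ℕ, Finset.HasAntidiagonal.antidiagonal k, G x.2.1 := (Summable.tsum_sigma hσsum).symm
      _ = ∑' tj : ℕ × ℕ, G tj := Finset.HasAntidiagonal.sigmaAntidiagonalEquivProd.tsum_eq (f := G)
  have hstep2 : (∑' tj : ℕ × ℕ, G tj) = ∑' t : ℕ, ∑' j : ℕ, G (t, j) := Summable.tsum_prod hGsum
  -- final equality
  refine ⟨part1, mainDeriv.differentiableAt, part3, part4, ?_⟩
  rw [mainDeriv.fderiv, hstep1, hstep2]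
  exact tsum_congr fun t => (hC3 t).trans (hTt t).symm

end
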